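/- Let every function in F be continuous, let φ be a bounded L_F-sentence, and let δ > 0. If α(φ) > 0 then φ is true, and if α(φ) < δ then the δ-strengthening φ^{+δ} is false. Consequently, for every bounded sentence φ and every δ > 0, at least one of the two conditions 'φ is true' or 'φ^{+δ} is false' is certified by comparing the real number α(φ) with 0 and δ. -/

import Mathlib

/-! Syntax and semantics of bounded first-order sentences over ℝ in a signature `S`
of real-valued functions containing 0, negation, addition, absolute value and all
rational constants. -/

/-- A signature: for each arity `n`, a set of functions `(Fin n → ℝ) → ℝ`, required to
contain the constant `0`, unary negation, addition, the absolute value, and all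
rational constants. -/
structure Sig : Type 1 where
  mem : ∀ n : ℕ, Set ((Fin n → ℝ) → ℝ)
  zero_mem : (fun _ : Fin 0 → ℝ => (0 : ℝ)) ∈ mem 0
  neg_mem : (fun v : Fin 1 → ℝ => -(v 0)) ∈ mem 1
  add_mem : (fun v : Fin 2 → ℝ => v 0 + v 1) ∈ mem 2
  abs_mem : (fun v : Fin 1 → ℝ => |v 0|) ∈ mem 1
  rat_mem : ∀ q : ℚ, (fun _ : Fin 0 → ℝ => (q : ℝ)) ∈ mem 0

/-- Terms: variables (indexed by ℕ) and applications of functions of the signature. -/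
inductive RTerm (S : Sig) : Type
  | var : ℕ → RTerm S
  | app : (k : ℕ) → (f : (Fin k → ℝ) → ℝ) → f ∈ S.mem k → (Fin k → RTerm S) → RTerm S

variable {S : Sig}

/-- Value of a term under an assignment of the variables. -/
noncomputable def RTerm.eval (σ : ℕ → ℝ) : RTerm S → ℝ
  | .var n => σ n
  | .app _ f _ ts => f fun i => (ts i).eval σ

/-- The variable `x` occurs in the term. -/
def RTerm.Occurs (x : ℕ) : RTerm S → Prop
  | .var n => n = x
  | .app _ _ _ ts => ∃ i, (ts i).Occurs x

/-- The term `-t`, built from the unary negation of the signature. -/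
def RTerm.negT (t : RTerm S) : RTerm S :=
  .app 1 (fun v : Fin 1 → ℝ => -(v 0)) S.neg_mem fun _ => t

/-- Bounded `L_F`-formulas.  An atom `gt t c` (resp. `ge t c`) is the inequality
`t > c` (resp. `t ≥ c`).  Genuine `L_F`-formulas have all atom thresholds `c = 0`
(`RFormula.Zeroed`); nonzero thresholds arise from the δ-perturbations. -/
inductive RFormula (S : Sig) : Type
  | gt : RTerm S → ℝ → RFormula S
  | ge : RTerm S → ℝ → RFormula S
  | and : RFormula S → RFormula S → RFormula S
  | or : RFormula S → RFormula S → RFormula S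
  | ex : ℕ → RTerm S → RTerm S → RFormula S → RFormula S
  | all : ℕ → RTerm S → RTerm S → RFormula S → RFormula S

/-- Standard semantics over ℝ; the bound `[u,v]` is read as the closed interval
between `min u v` and `max u v` (`Set.uIcc`). -/
def RFormula.Holds : RFormula S → (ℕ → ℝ) → Prop
  | .gt t c, σ => t.eval σ > c
  | .ge t c, σ => t.eval σ ≥ c
  | .and φ ψ, σ => φ.Holds σ ∧ ψ.Holds σ
  | .or φ ψ, σ => φ.Holds σ ∨ ψ.Holds σ
  | .ex x u v φ, σ => ∃ a ∈ Set.uIcc (u.eval σ) (v.eval σ), φ.Holds (Function.update σ x a)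
  | .all x u v φ, σ => ∀ a ∈ Set.uIcc (u.eval σ) (v.eval σ), φ.Holds (Function.update σ x a)

/-- Truth of a (closed) formula: it holds under the (irrelevant) zero assignment. -/
def RFormula.IsTrue (φ : RFormula S) : Prop := φ.Holds fun _ => 0

/-- The variable `x` occurs free in the formula. -/
def RFormula.FreeIn (x : ℕ) : RFormula S → Prop
  | .gt t _ => t.Occurs x
  | .ge t _ => t.Occurs x
  | .and φ ψ => φ.FreeIn x ∨ ψ.FreeIn x
  | .or φ ψ => φ.FreeIn x ∨ ψ.FreeIn x
  | .ex y u v φ => u.Occurs x ∨ v.Occurs x ∨ (x ≠ y ∧ φ.FreeIn x)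
  | .all y u v φ => u.Occurs x ∨ v.Occurs x ∨ (x ≠ y ∧ φ.FreeIn x)

/-- A sentence has no free variables. -/
def RFormula.IsSentence (φ : RFormula S) : Prop := ∀ x, ¬ φ.FreeIn x

/-- The bound terms of each quantifier do not involve the quantified variable. -/
def RFormula.BoundsOK : RFormula S → Prop
  | .gt _ _ => True
  | .ge _ _ => True
  | .and φ ψ => φ.BoundsOK ∧ ψ.BoundsOK
  | .or φ ψ => φ.BoundsOK ∧ ψ.BoundsOK
  | .ex x u v φ => ¬ u.Occurs x ∧ ¬ v.Occurs x ∧ φ.BoundsOK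
  | .all x u v φ => ¬ u.Occurs x ∧ ¬ v.Occurs x ∧ φ.BoundsOK

/-- All atom thresholds are `0`, i.e. all atoms are of the form `t > 0` or `t ≥ 0`. -/
def RFormula.Zeroed : RFormula S → Prop
  | .gt _ c => c = 0
  | .ge _ c => c = 0
  | .and φ ψ => φ.Zeroed ∧ ψ.Zeroed
  | .or φ ψ => φ.Zeroed ∧ ψ.Zeroed
  | .ex _ _ _ φ => φ.Zeroed
  | .all _ _ _ φ => φ.Zeroed

/-- A bounded `L_F`-sentence: atoms `t > 0` / `t ≥ 0`, quantifier bounds not involving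
the quantified variable, and no free variables. -/
def RFormula.IsBoundedSentence (φ : RFormula S) : Prop :=
  φ.Zeroed ∧ φ.BoundsOK ∧ φ.IsSentence

/-- δ-strengthening `φ^{+δ}`: every atom `t > 0` becomes `t > δ`, every `t ≥ 0`
becomes `t ≥ δ` (quantifier bounds unchanged). -/
def RFormula.strengthen (δ : ℝ) : RFormula S → RFormula S
  | .gt t c => .gt t (c + δ)
  | .ge t c => .ge t (c + δ)
  | .and φ ψ => .and (φ.strengthen δ) (ψ.strengthen δ)
  | .or φ ψ => .or (φ.strengthen δ) (ψ.strengthen δ)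
  | .ex x u v φ => .ex x u v (φ.strengthen δ)
  | .all x u v φ => .all x u v (φ.strengthen δ)

/-- δ-weakening `φ^{-δ}`: every atom `t > 0` becomes `t > -δ`, every `t ≥ 0`
becomes `t ≥ -δ` (quantifier bounds unchanged). -/
def RFormula.weaken (δ : ℝ) : RFormula S → RFormula S
  | .gt t c => .gt t (c - δ)
  | .ge t c => .ge t (c - δ)
  | .and φ ψ => .and (φ.weaken δ) (ψ.weaken δ)
  | .or φ ψ => .or (φ.weaken δ) (ψ.weaken δ)
  | .ex x u v φ => .ex x u v (φ.weaken δ)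
  | .all x u v φ => .all x u v (φ.weaken δ)

/-- Syntactic negation: `t > c ↦ -t ≥ -c`, `t ≥ c ↦ -t > -c`, swapping `∧`/`∨` and
`∃`/`∀` (quantifier bounds unchanged).  On zero-threshold atoms this is exactly
`t > 0 ↦ -t ≥ 0` and `t ≥ 0 ↦ -t > 0`. -/
def RFormula.neg : RFormula S → RFormula S
  | .gt t c => .ge t.negT (-c)
  | .ge t c => .gt t.negT (-c)
  | .and φ ψ => .or φ.neg ψ.neg
  | .or φ ψ => .and φ.neg ψ.neg
  | .ex x u v φ => .all x u v φ.neg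
  | .all x u v φ => .ex x u v φ.neg

/-- Strictification `st(φ)`: every nonstrict atom becomes strict. -/
def RFormula.strict : RFormula S → RFormula S
  | .gt t c => .gt t c
  | .ge t c => .gt t c
  | .and φ ψ => .and φ.strict ψ.strict
  | .or φ ψ => .or φ.strict ψ.strict
  | .ex x u v φ => .ex x u v φ.strict
  | .all x u v φ => .all x u v φ.strict

/-- Destrictification `de(φ)`: every strict atom becomes nonstrict. -/
def RFormula.destrict : RFormula S → RFormula S
  | .gt t c => .ge t c
  | .ge t c => .ge t c
  | .and φ ψ => .and φ.destrict ψ.destrict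
  | .or φ ψ => .or φ.destrict ψ.destrict
  | .ex x u v φ => .ex x u v φ.destrict
  | .all x u v φ => .all x u v φ.destrict

/-- `φ` is δ-robust: truth of the δ-weakening implies truth of `φ`. -/
def RFormula.Robust (δ : ℝ) (φ : RFormula S) : Prop :=
  (φ.weaken δ).IsTrue → φ.IsTrue

/-- All functions of the signature are continuous. -/
def Sig.ContinuousFuns (S : Sig) : Prop :=
  ∀ (k : ℕ) (f : (Fin k → ℝ) → ℝ), f ∈ S.mem k → Continuous f

/-- The translation `α`: atoms give the (shifted) term value, `∧ ↦ min`, `∨ ↦ max`,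
`∃x∈[u,v] ↦ max over the interval`, `∀x∈[u,v] ↦ min over the interval` (the extrema
are expressed via `sSup`/`sInf` of the image; when all functions of the signature are
continuous they are attained, the intervals being nonempty and compact). -/
noncomputable def RFormula.alpha : RFormula S → (ℕ → ℝ) → ℝ
  | .gt t c, σ => t.eval σ - c
  | .ge t c, σ => t.eval σ - c
  | .and φ ψ, σ => min (φ.alpha σ) (ψ.alpha σ)
  | .or φ ψ, σ => max (φ.alpha σ) (ψ.alpha σ)
  | .ex x u v φ, σ =>
      sSup ((fun a => φ.alpha (Function.update σ x a)) '' Set.uIcc (u.eval σ) (v.eval σ))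
  | .all x u v φ, σ =>
      sInf ((fun a => φ.alpha (Function.update σ x a)) '' Set.uIcc (u.eval σ) (v.eval σ))

section Aux

lemma aux_uIcc_eq_image (a b : ℝ) :
    Set.uIcc a b = (fun θ : ℝ => (1 - θ) * a + θ * b) '' Set.Icc (0 : ℝ) 1 := by
  rw [← segment_eq_uIcc, segment_eq_image]
  simp [smul_eq_mul]

lemma aux_continuous_update (x : ℕ) :
    Continuous (fun p : (ℕ → ℝ) × ℝ => Function.update p.1 x p.2) := by
  refine continuous_pi fun i => ?_
  by_cases hix : i = x
  · subst hix
    simpa [Function.update_apply] using (continuous_snd : Continuous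
      fun p : (ℕ → ℝ) × ℝ => p.2)
  · simpa [Function.update_apply, hix, Function.comp_def] using
      ((continuous_apply i).comp (continuous_fst : Continuous
        fun p : (ℕ → ℝ) × ℝ => p.1))

lemma aux_moving_sSup_continuous {X : Type*} [TopologicalSpace X] {u v : X → ℝ}
    {g : X → ℝ → ℝ} (hu : Continuous u) (hv : Continuous v) (hg : Continuous ↿g) :
    Continuous fun x => sSup (g x '' Set.uIcc (u x) (v x)) := by
  have h : ∀ x, g x '' Set.uIcc (u x) (v x)
      = (fun θ : ℝ => g x ((1 - θ) * u x + θ * v x)) '' Set.Icc (0 : ℝ) 1 := by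
    intro x; rw [aux_uIcc_eq_image, Set.image_image]
  simp_rw [h]
  refine isCompact_Icc.continuous_sSup ?_
  have : Continuous fun p : X × ℝ => ((p.1 : X), (1 - p.2) * u p.1 + p.2 * v p.1) :=
    continuous_fst.prodMk
      (((continuous_const.sub continuous_snd).mul (hu.comp continuous_fst)).add
        (continuous_snd.mul (hv.comp continuous_fst)))
  exact hg.comp this

lemma aux_moving_sInf_continuous {X : Type*} [TopologicalSpace X] {u v : X → ℝ}
    {g : X → ℝ → ℝ} (hu : Continuous u) (hv : Continuous v) (hg : Continuous ↿g) :
    Continuous fun x => sInf (g x '' Set.uIcc (u x) (v x)) := by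
  have h : ∀ x, g x '' Set.uIcc (u x) (v x)
      = (fun θ : ℝ => g x ((1 - θ) * u x + θ * v x)) '' Set.Icc (0 : ℝ) 1 := by
    intro x; rw [aux_uIcc_eq_image, Set.image_image]
  simp_rw [h]
  refine isCompact_Icc.continuous_sInf ?_
  have : Continuous fun p : X × ℝ => ((p.1 : X), (1 - p.2) * u p.1 + p.2 * v p.1) :=
    continuous_fst.prodMk
      (((continuous_const.sub continuous_snd).mul (hu.comp continuous_fst)).add
        (continuous_snd.mul (hv.comp continuous_fst)))
  exact hg.comp this

lemma RTerm.eval_continuous (hS : S.ContinuousFuns) (t : RTerm S) :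
    Continuous fun σ => t.eval σ := by
  induction t with
  | var n => exact continuous_apply n
  | app k f hf ts ih =>
      exact (hS k f hf).comp (continuous_pi fun i => ih i)

lemma RFormula.alpha_continuous (hS : S.ContinuousFuns) (φ : RFormula S) :
    Continuous φ.alpha := by
  induction φ with
  | gt t c => exact (t.eval_continuous hS).sub continuous_const
  | ge t c => exact (t.eval_continuous hS).sub continuous_const
  | and φ ψ ih1 ih2 => exact ih1.min ih2
  | or φ ψ ih1 ih2 => exact ih1.max ih2
  | ex x u v φ ih =>
      exact aux_moving_sSup_continuous (u.eval_continuous hS) (v.eval_continuous hS)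
        (ih.comp (aux_continuous_update x))
  | all x u v φ ih =>
      exact aux_moving_sInf_continuous (u.eval_continuous hS) (v.eval_continuous hS)
        (ih.comp (aux_continuous_update x))

lemma RFormula.alpha_pos_holds (hS : S.ContinuousFuns) (φ : RFormula S) :
    ∀ σ, 0 < φ.alpha σ → φ.Holds σ := by
  induction φ with
  | gt t c => exact fun σ h => sub_pos.mp h
  | ge t c => exact fun σ h => (sub_pos.mp h).le
  | and φ ψ ih1 ih2 =>
      exact fun σ h => ⟨ih1 σ (h.trans_le (min_le_left _ _)),
        ih2 σ (h.trans_le (min_le_right _ _))⟩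
  | or φ ψ ih1 ih2 =>
      exact fun σ h => (lt_max_iff.mp h).imp (ih1 σ) (ih2 σ)
  | ex x u v φ ih =>
      intro σ h
      have hg : Continuous fun a => φ.alpha (Function.update σ x a) :=
        (φ.alpha_continuous hS).comp
          ((aux_continuous_update x).comp (Continuous.prodMk_right σ))
      have hK : IsCompact ((fun a => φ.alpha (Function.update σ x a)) ''
          Set.uIcc (u.eval σ) (v.eval σ)) :=
        isCompact_uIcc.image hg
      have hne : ((fun a => φ.alpha (Function.update σ x a)) ''
          Set.uIcc (u.eval σ) (v.eval σ)).Nonempty :=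
        Set.Nonempty.image _ Set.nonempty_uIcc
      obtain ⟨a, ha, hae⟩ := hK.sSup_mem hne
      exact ⟨a, ha, ih _ (lt_of_lt_of_eq h hae.symm)⟩
  | all x u v φ ih =>
      intro σ h a ha
      have hg : Continuous fun a => φ.alpha (Function.update σ x a) :=
        (φ.alpha_continuous hS).comp
          ((aux_continuous_update x).comp (Continuous.prodMk_right σ))
      have hbdd : BddBelow ((fun a => φ.alpha (Function.update σ x a)) ''
          Set.uIcc (u.eval σ) (v.eval σ)) :=
        (isCompact_uIcc.image hg).bddBelow
      exact ih _ (h.trans_le (csInf_le hbdd (Set.mem_image_of_mem _ ha)))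

lemma RFormula.strengthen_holds_le_alpha (hS : S.ContinuousFuns) (δ : ℝ)
    (φ : RFormula S) : ∀ σ, (φ.strengthen δ).Holds σ → δ ≤ φ.alpha σ := by
  induction φ with
  | gt t c =>
      intro σ h
      have : t.eval σ > c + δ := h
      simp only [RFormula.alpha]; linarith
  | ge t c =>
      intro σ h
      have : t.eval σ ≥ c + δ := h
      simp only [RFormula.alpha]; linarith
  | and φ ψ ih1 ih2 =>
      exact fun σ h => le_min (ih1 σ h.1) (ih2 σ h.2)
  | or φ ψ ih1 ih2 =>
      exact fun σ h => h.elim (fun h1 => le_max_of_le_left (ih1 σ h1))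
        (fun h2 => le_max_of_le_right (ih2 σ h2))
  | ex x u v φ ih =>
      rintro σ ⟨a, ha, hh⟩
      have hg : Continuous fun a => φ.alpha (Function.update σ x a) :=
        (φ.alpha_continuous hS).comp
          ((aux_continuous_update x).comp (Continuous.prodMk_right σ))
      have hbdd : BddAbove ((fun a => φ.alpha (Function.update σ x a)) ''
          Set.uIcc (u.eval σ) (v.eval σ)) :=
        (isCompact_uIcc.image hg).bddAbove
      exact (ih _ hh).trans (le_csSup hbdd (Set.mem_image_of_mem _ ha))
  | all x u v φ ih =>
      intro σ h
      refine le_csInf (Set.Nonempty.image _ Set.nonempty_uIcc) ?_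
      rintro _ ⟨a, ha, rfl⟩
      exact ih _ (h a ha)

end Aux

theorem delta_decision_certificate (S : Sig) (hS : S.ContinuousFuns)
    (φ : RFormula S) (hφ : φ.IsBoundedSentence) (δ : ℝ) (hδ : 0 < δ) :
    (φ.alpha (fun _ => 0) > 0 → φ.IsTrue) ∧
    (φ.alpha (fun _ => 0) < δ → ¬ (φ.strengthen δ).IsTrue) ∧
    (φ.IsTrue ∨ ¬ (φ.strengthen δ).IsTrue) := by
  refine ⟨fun h => φ.alpha_pos_holds hS _ h, fun h htrue => ?_, ?_⟩
  · exact absurd (φ.strengthen_holds_le_alpha hS δ _ htrue) (not_le.mpr h)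
  · by_cases h : 0 < φ.alpha (fun _ => 0)
    · exact Or.inl (φ.alpha_pos_holds hS _ h)
    · refine Or.inr fun htrue => ?_
      have := φ.strengthen_holds_le_alpha hS δ _ htrue
      push_neg at h
      linarith
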